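/- Suppose positive integers a, b, c and positive integers r, s, t satisfy ab + 1 = r^2, ac + 1 = s^2, bc + 1 = t^2. Let d = a + b + c + 2abc + 2rst. Then ad + 1 = (at + rs)^2, bd + 1 = (bs + rt)^2, and cd + 1 = (cr + st)^2. -/
import Mathlib

theorem stmt_5 (a b c r s t : ℤ) (ha : 0 < a) (hb : 0 < b) (hc : 0 < c)
    (hr : 0 < r) (hs : 0 < s) (ht : 0 < t)
    (h1 : a*b + 1 = r^2) (h2 : a*c + 1 = s^2) (h3 : b*c + 1 = t^2) :
    let d := a + b + c + 2*a*b*c + 2*r*s*t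
    a*d + 1 = (a*t + r*s)^2 ∧ b*d + 1 = (b*s + r*t)^2 ∧ c*d + 1 = (c*r + s*t)^2 := by
  intro d
  refine ⟨?_, ?_, ?_⟩
  · linear_combination (a*c+1) * h1 + (a^2) * h3 + (r^2)*h2
  · linear_combination (b*c+1) * h1 + (b^2) * h2 + (r^2)*h3
  · linear_combination (b*c+1) * h2 + (c^2)*h1 + (s^2)*h3
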